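/- Let n ≥ 1 and let K be an n×n matrix over the semiring ℝ_min that is irreducible: for all indices i, j there exists k ≥ 1 with (K^k)_{ij} ≠ 𝟘 (where 𝟘 = +∞). If λ₁, λ₂ ∈ ℝ_min are eigenvalues of K, i.e. there exist vectors v₁, v₂, each not equal to the zero vector, with K ⊙ v₁ = λ₁ ⊙ v₁ and K ⊙ v₂ = λ₂ ⊙ v₂, then λ₁ = λ₂: the eigenvalue of an irreducible matrix over ℝ_min is unique. -/

import Mathlib

open Tropical Matrix Finset

lemma trop_sum_eq_zero_iff {α : Type*} (s : Finset α) (f : α → Tropical (WithTop ℝ)) :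
    ∑ x ∈ s, f x = 0 ↔ ∀ x ∈ s, f x = 0 := by
  rw [← untrop_inj_iff, Finset.untrop_sum', untrop_zero, Finset.inf_eq_top_iff]
  constructor
  · intro h x hx
    have := h x hx
    simpa [← untrop_inj_iff] using this
  · intro h x hx
    simpa [← untrop_inj_iff] using h x hx

lemma trop_mul_eq_zero_iff (a b : Tropical (WithTop ℝ)) :
    a * b = 0 ↔ a = 0 ∨ b = 0 := by
  rw [← untrop_inj_iff, untrop_mul, untrop_zero, WithTop.add_eq_top]
  simp [← untrop_inj_iff]

lemma trop_pow_eigen {n : ℕ} (K : Matrix (Fin n) (Fin n) (Tropical (WithTop ℝ)))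
    (l : Tropical (WithTop ℝ)) (v : Fin n → Tropical (WithTop ℝ))
    (he : ∀ i, K.mulVec v i = l * v i) (k : ℕ) :
    ∀ i, (K ^ k).mulVec v i = l ^ k * v i := by
  induction k with
  | zero => intro i; simp [Matrix.one_mulVec]
  | succ k ih =>
    intro i
    have hw : (K ^ k).mulVec v = fun m => l ^ k * v m := funext ih
    rw [pow_succ', ← Matrix.mulVec_mulVec, hw]
    have : K.mulVec (fun m => l ^ k * v m) i = l ^ k * K.mulVec v i := by
      simp [Matrix.mulVec, dotProduct, Finset.mul_sum, mul_left_comm]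
    rw [this, he i, pow_succ']
    ring

lemma trop_eigenvector_ne_zero {n : ℕ} (K : Matrix (Fin n) (Fin n) (Tropical (WithTop ℝ)))
    (hirr : ∀ i j, ∃ k : ℕ, 1 ≤ k ∧ (K ^ k) i j ≠ 0)
    (l : Tropical (WithTop ℝ)) (v : Fin n → Tropical (WithTop ℝ))
    (hv : v ≠ 0) (he : ∀ i, K.mulVec v i = l * v i) :
    ∀ i, v i ≠ 0 := by
  obtain ⟨j, hj⟩ : ∃ j, v j ≠ 0 := by
    by_contra h; push_neg at h
    exact hv (funext fun j => h j)
  intro i hi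
  obtain ⟨k, hk1, hkij⟩ := hirr i j
  have hpow := trop_pow_eigen K l v he k i
  rw [hi, mul_zero] at hpow
  have hsum : ∑ m, (K ^ k) i m * v m = 0 := by
    simpa [Matrix.mulVec, dotProduct] using hpow
  have := (trop_sum_eq_zero_iff Finset.univ (fun m => (K ^ k) i m * v m)).mp hsum j
    (Finset.mem_univ j)
  rcases (trop_mul_eq_zero_iff _ _).mp this with h | h
  · exact hkij h
  · exact hj h

lemma trop_eigen_le {n : ℕ} (hn : 1 ≤ n)
    (K : Matrix (Fin n) (Fin n) (Tropical (WithTop ℝ)))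
    (l₁ l₂ : Tropical (WithTop ℝ)) (a b : Fin n → ℝ)
    (he₁ : ∀ i, K.mulVec (fun m => trop ((a m : WithTop ℝ))) i = l₁ * trop ((a i : WithTop ℝ)))
    (he₂ : ∀ i, K.mulVec (fun m => trop ((b m : WithTop ℝ))) i = l₂ * trop ((b i : WithTop ℝ))) :
    untrop l₂ ≤ untrop l₁ := by
  haveI : Nonempty (Fin n) := Fin.pos_iff_nonempty.mp hn
  obtain ⟨i₀, -, hi₀⟩ := Finset.exists_max_image Finset.univ (fun i => b i - a i)
    Finset.univ_nonempty
  set M : ℝ := b i₀ - a i₀ with hM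
  have key : ∀ (c : Fin n → ℝ),
      untrop (K.mulVec (fun m => trop ((c m : WithTop ℝ))) i₀)
        = Finset.univ.inf (fun m => untrop (K i₀ m) + (c m : WithTop ℝ)) := by
    intro c
    simp only [Matrix.mulVec, dotProduct, Finset.untrop_sum']
    congr 1
  have hg : Finset.univ.inf (fun m => untrop (K i₀ m) + (a m : WithTop ℝ))
      = untrop l₁ + (a i₀ : WithTop ℝ) := by
    rw [← key a, he₁ i₀, untrop_mul, untrop_trop]
  have hf : Finset.univ.inf (fun m => untrop (K i₀ m) + (b m : WithTop ℝ))
      = untrop l₂ + (b i₀ : WithTop ℝ) := by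
    rw [← key b, he₂ i₀, untrop_mul, untrop_trop]
  obtain ⟨m₀, -, hm₀⟩ := Finset.exists_mem_eq_inf Finset.univ Finset.univ_nonempty
    (fun m => untrop (K i₀ m) + (a m : WithTop ℝ))
  have h1 : untrop l₂ + (b i₀ : WithTop ℝ) ≤ untrop (K i₀ m₀) + (b m₀ : WithTop ℝ) :=
    hf ▸ Finset.inf_le (Finset.mem_univ m₀)
  have h2 : (b m₀ : WithTop ℝ) ≤ (a m₀ : WithTop ℝ) + (M : WithTop ℝ) := by
    rw [← WithTop.coe_add, WithTop.coe_le_coe]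
    have := hi₀ m₀ (Finset.mem_univ m₀)
    linarith
  have h3 : untrop (K i₀ m₀) + (b m₀ : WithTop ℝ)
      ≤ (untrop l₁ + (a i₀ : WithTop ℝ)) + (M : WithTop ℝ) := by
    calc untrop (K i₀ m₀) + (b m₀ : WithTop ℝ)
        ≤ untrop (K i₀ m₀) + ((a m₀ : WithTop ℝ) + (M : WithTop ℝ)) := add_le_add_right h2 _
      _ = (untrop (K i₀ m₀) + (a m₀ : WithTop ℝ)) + (M : WithTop ℝ) := (add_assoc _ _ _).symm
      _ = (untrop l₁ + (a i₀ : WithTop ℝ)) + (M : WithTop ℝ) := by rw [← hm₀, hg]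
  have h4 : (untrop l₁ + (a i₀ : WithTop ℝ)) + (M : WithTop ℝ)
      = untrop l₁ + (b i₀ : WithTop ℝ) := by
    rw [add_assoc, ← WithTop.coe_add]
    congr 1
    rw [WithTop.coe_eq_coe]
    simp [hM]
  have h5 : untrop l₂ + (b i₀ : WithTop ℝ) ≤ untrop l₁ + (b i₀ : WithTop ℝ) :=
    le_trans h1 (h4 ▸ h3)
  exact (WithTop.add_le_add_iff_right (WithTop.coe_ne_top)).mp h5

/-- Over the semiring `ℝ_min = Tropical (WithTop ℝ)`, the eigenvalue of an
irreducible matrix is unique: if `K` is irreducible (for all `i, j` some power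
`K^k`, `k ≥ 1`, has `(K^k)_{ij} ≠ 𝟘`) and `λ₁, λ₂` are eigenvalues of `K`
with nontrivial eigenvectors, then `λ₁ = λ₂`. -/
theorem tropical_eigenvalue_unique {n : ℕ} (hn : 1 ≤ n)
    (K : Matrix (Fin n) (Fin n) (Tropical (WithTop ℝ)))
    (hirr : ∀ i j, ∃ k : ℕ, 1 ≤ k ∧ (K ^ k) i j ≠ 0)
    (l₁ l₂ : Tropical (WithTop ℝ)) (v₁ v₂ : Fin n → Tropical (WithTop ℝ))
    (hv₁ : v₁ ≠ 0) (hv₂ : v₂ ≠ 0)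
    (he₁ : ∀ i, K.mulVec v₁ i = l₁ * v₁ i)
    (he₂ : ∀ i, K.mulVec v₂ i = l₂ * v₂ i) :
    l₁ = l₂ := by
  have hne₁ := trop_eigenvector_ne_zero K hirr l₁ v₁ hv₁ he₁
  have hne₂ := trop_eigenvector_ne_zero K hirr l₂ v₂ hv₂ he₂
  have hx₁ : ∀ i, untrop (v₁ i) ≠ ⊤ := fun i h =>
    hne₁ i (untrop_injective (by rw [h, untrop_zero]))
  have hx₂ : ∀ i, untrop (v₂ i) ≠ ⊤ := fun i h =>
    hne₂ i (untrop_injective (by rw [h, untrop_zero]))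
  set a : Fin n → ℝ := fun i => (untrop (v₁ i)).untop (hx₁ i) with ha
  set b : Fin n → ℝ := fun i => (untrop (v₂ i)).untop (hx₂ i) with hb
  have ha' : v₁ = fun m => trop ((a m : WithTop ℝ)) := by
    funext i
    apply untrop_injective
    simp [ha, WithTop.coe_untop]
  have hb' : v₂ = fun m => trop ((b m : WithTop ℝ)) := by
    funext i
    apply untrop_injective
    simp [hb, WithTop.coe_untop]
  rw [ha'] at he₁
  rw [hb'] at he₂
  apply untrop_injective
  exact le_antisymm (trop_eigen_le hn K l₂ l₁ b a he₂ he₁)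
    (trop_eigen_le hn K l₁ l₂ a b he₁ he₂)
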